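/- Let R be a finite commutative Frobenius ring of characteristic 2 and G a finite group of order n. For v ∈ RG, the matrix [I_n | σ(v)] generates a self-dual code over R if and only if v·v^T = 1, i.e. v is a unitary unit in RG. -/

import Mathlib

/-- The matrix σ(v) of a group ring element, with (i,j) entry the coefficient of i⁻¹ * j. -/
noncomputable def sigmaMat {R G : Type*} [Semiring R] [Group G] (v : MonoidAlgebra R G) :
    Matrix G G R := Matrix.of fun i j => v.coeff (i⁻¹ * j)

/-- The canonical involution on a group ring, sending Σ αᵢ gᵢ to Σ αᵢ gᵢ⁻¹. -/
noncomputable def transInvol {R G : Type*} [Semiring R] [Group G] (v : MonoidAlgebra R G) :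
    MonoidAlgebra R G := MonoidAlgebra.ofCoeff (Finsupp.equivMapDomain (Equiv.inv G) v.coeff)
/-- The Euclidean dual of a linear code C ⊆ R^ι. -/
noncomputable def dualCode {R ι : Type*} [CommRing R] [Fintype ι] (C : Submodule R (ι → R)) :
    Submodule R (ι → R) where
  carrier := {x | ∀ c ∈ C, ∑ i, x i * c i = 0}
  add_mem' := by
    intro a b ha hb c hc
    have h1 := ha c hc
    have h2 := hb c hc
    simp only [Pi.add_apply, add_mul, Finset.sum_add_distrib, h1, h2, add_zero]
  zero_mem' := by intro c hc; simp
  smul_mem' := by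
    intro r x hx c hc
    have h := hx c hc
    simp only [Pi.smul_apply, smul_eq_mul, mul_assoc]
    rw [← Finset.mul_sum, h, mul_zero]

lemma mem_dualCode {R ι : Type*} [CommRing R] [Fintype ι] (C : Submodule R (ι → R))
    (x : ι → R) : x ∈ dualCode C ↔ ∀ c ∈ C, ∑ i, x i * c i = 0 := Iff.rfl

lemma transInvol_apply {R G : Type*} [Semiring R] [Group G] (v : MonoidAlgebra R G) (x : G) :
    (transInvol v).coeff x = v.coeff x⁻¹ := rfl

lemma mul_apply_group {R G : Type*} [CommRing R] [Group G] [Fintype G] [DecidableEq G]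
    (v w : MonoidAlgebra R G) (x : G) :
    (v * w).coeff x = ∑ a : G, v.coeff a * w.coeff (a⁻¹ * x) := by
  rw [MonoidAlgebra.coeff_mul_apply_left, Finsupp.sum_fintype]
  intro a; simp

section Transport

variable {R : Type*} [CommRing R] {ι κ : Type*} [Fintype ι] [Fintype κ] (e : κ ≃ ι)

/-- Relabeling coordinates commutes with taking duals. -/
lemma dualCode_map (C : Submodule R (ι → R)) :
    dualCode (Submodule.map (LinearEquiv.funCongrLeft R R e).toLinearMap C)
      = Submodule.map (LinearEquiv.funCongrLeft R R e).toLinearMap (dualCode C) := by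
  set T := LinearEquiv.funCongrLeft R R e with hT
  have hdot : ∀ x c : ι → R, ∑ k : κ, T x k * T c k = ∑ i : ι, x i * c i := by
    intro x c
    simp only [hT, LinearEquiv.funCongrLeft_apply, LinearMap.funLeft_apply]
    exact Equiv.sum_comp e (fun i => x i * c i)
  apply SetLike.coe_injective
  ext x
  constructor
  · intro hx
    refine ⟨T.symm x, ?_, by simp⟩
    intro c hc
    have := hx (T c) (Submodule.mem_map_of_mem hc)
    rwa [show (x : κ → R) = T (T.symm x) by simp, hdot] at this
  · rintro ⟨y, hy, rfl⟩
    rintro _ ⟨c, hc, rfl⟩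
    rw [LinearEquiv.coe_coe, hdot]
    exact hy c hc

lemma card_map_equiv (C : Submodule R (ι → R)) :
    Nat.card (Submodule.map (LinearEquiv.funCongrLeft R R e).toLinearMap C) = Nat.card C := by
  exact (Nat.card_congr (Submodule.equivMapOfInjective
    (LinearEquiv.funCongrLeft R R e).toLinearMap
    (LinearEquiv.funCongrLeft R R e).injective C).toEquiv).symm

end Transport

/-- The Frobenius hypothesis, transported to an arbitrary universe. -/
lemma frob_univ {R : Type*} [CommRing R] [Fintype R]
    (hFrob : ∀ (ι : Type) [Fintype ι] (C : Submodule R (ι → R)),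
      Nat.card C * Nat.card (dualCode C) = Nat.card R ^ Fintype.card ι)
    (ι : Type*) [Fintype ι] (C : Submodule R (ι → R)) :
    Nat.card C * Nat.card (dualCode C) = Nat.card R ^ Fintype.card ι := by
  classical
  set e : Fin (Fintype.card ι) ≃ ι := (Fintype.equivFin ι).symm with he
  have h := hFrob (Fin (Fintype.card ι))
    (Submodule.map (LinearEquiv.funCongrLeft R R e).toLinearMap C)
  rw [dualCode_map e C, card_map_equiv, card_map_equiv] at h
  simpa using h

section Main

variable {R G : Type*} [CommRing R] [Fintype R] [CharP R 2]
    [Group G] [Fintype G] [DecidableEq G] (v : MonoidAlgebra R G)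

/-- The pairwise dot products of rows of [I | σ(v)] vanish iff v·vᵀ = 1. -/
lemma rows_orthog_iff :
    (∀ i j : G, ∑ k : G ⊕ G, Matrix.fromCols (1 : Matrix G G R) (sigmaMat v) i k *
        Matrix.fromCols (1 : Matrix G G R) (sigmaMat v) j k = 0)
      ↔ v * transInvol v = 1 := by
  have hdot : ∀ i j : G, (∑ k : G ⊕ G,
      Matrix.fromCols (1 : Matrix G G R) (sigmaMat v) i k *
        Matrix.fromCols (1 : Matrix G G R) (sigmaMat v) j k)
      = (if i = j then 1 else 0) + ∑ g : G, v.coeff (i⁻¹ * g) * v.coeff (j⁻¹ * g) := by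
    intro i j
    rw [Fintype.sum_sum_type]
    have hA : ∑ g : G, Matrix.fromCols (1 : Matrix G G R) (sigmaMat v) i (Sum.inl g) *
        Matrix.fromCols (1 : Matrix G G R) (sigmaMat v) j (Sum.inl g)
        = (if i = j then 1 else 0) := by
      simp only [Matrix.fromCols, Matrix.of_apply, Sum.elim_inl, Matrix.one_apply,
        mul_ite, mul_one, mul_zero, Finset.sum_ite_eq, Finset.mem_univ, if_true]
    have hB : ∑ g : G, Matrix.fromCols (1 : Matrix G G R) (sigmaMat v) i (Sum.inr g) *
        Matrix.fromCols (1 : Matrix G G R) (sigmaMat v) j (Sum.inr g)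
        = ∑ g : G, v.coeff (i⁻¹ * g) * v.coeff (j⁻¹ * g) := by
      simp [Matrix.fromCols, sigmaMat]
    rw [hA, hB]
  have hmul : ∀ i j : G, (v * transInvol v).coeff (i⁻¹ * j)
      = ∑ g : G, v.coeff (i⁻¹ * g) * v.coeff (j⁻¹ * g) := by
    intro i j
    rw [mul_apply_group]
    rw [← Equiv.sum_comp (Equiv.mulLeft i⁻¹)
      (fun a => v.coeff a * (transInvol v).coeff (a⁻¹ * (i⁻¹ * j)))]
    apply Finset.sum_congr rfl
    intro g _
    simp only [Equiv.coe_mulLeft, transInvol_apply]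
    congr 2
    group
  constructor
  · intro h
    ext x
    have h0 := h 1 x
    rw [hdot] at h0
    simp only [inv_one, one_mul] at h0
    have h2 := hmul 1 x
    simp only [inv_one, one_mul] at h2
    have h3 : (∑ g : G, v.coeff g * v.coeff (x⁻¹ * g)) = (if (1:G) = x then (1:R) else 0) := by
      have := eq_neg_of_add_eq_zero_right h0
      rw [this, CharTwo.neg_eq]
    rw [h2, h3]
    simp [MonoidAlgebra.one_def, MonoidAlgebra.coeff_single, Finsupp.single_apply]
  · intro h i j
    rw [hdot, ← hmul, h]
    have heq : i⁻¹ * j = 1 ↔ i = j := by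
      rw [inv_mul_eq_one]
    simp only [MonoidAlgebra.one_def, MonoidAlgebra.coeff_single, Finsupp.single_apply]
    by_cases hij : i = j
    · rw [if_pos hij, if_pos (heq.mpr hij).symm, CharTwo.add_self_eq_zero]
    · rw [if_neg hij, if_neg (fun hh => hij (heq.mp hh.symm)), add_zero]

lemma span_le_dual_iff (M : Matrix G (G ⊕ G) R) :
    Submodule.span R (Set.range fun i => M i) ≤
        dualCode (Submodule.span R (Set.range fun i => M i))
      ↔ ∀ i j : G, ∑ k : G ⊕ G, M i k * M j k = 0 := by
  constructor
  · intro h i j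
    have hi : M i ∈ Submodule.span R (Set.range fun i => M i) :=
      Submodule.subset_span ⟨i, rfl⟩
    have hj : M j ∈ Submodule.span R (Set.range fun i => M i) :=
      Submodule.subset_span ⟨j, rfl⟩
    exact h hi (M j) hj
  · intro h
    rw [Submodule.span_le]
    rintro _ ⟨i, rfl⟩
    rw [SetLike.mem_coe, mem_dualCode]
    intro c hc
    induction hc using Submodule.span_induction with
    | mem x hx => obtain ⟨j, rfl⟩ := hx; exact h i j
    | zero => simp
    | add x y _ _ hx hy =>
        simp only [Pi.add_apply, mul_add, Finset.sum_add_distrib]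
        rw [show (∑ k : G ⊕ G, M i k * x k) = 0 from hx,
          show (∑ k : G ⊕ G, M i k * y k) = 0 from hy, add_zero]
    | smul r x _ hx =>
        simp only [Pi.smul_apply, smul_eq_mul]
        have hr : ∀ k, M i k * (r * x k) = r * (M i k * x k) := fun k => by ring
        simp_rw [hr]
        rw [← Finset.mul_sum, show (∑ k : G ⊕ G, M i k * x k) = 0 from hx, mul_zero]

lemma card_span_rows (M : Matrix G (G ⊕ G) R)
    (hinj : Function.Injective M.vecMulLinear) :
    Nat.card (Submodule.span R (Set.range fun i => M i)) =
      Nat.card R ^ Fintype.card G := by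
  have h1 : Submodule.span R (Set.range fun i => M i) = LinearMap.range M.vecMulLinear := by
    rw [range_vecMulLinear]; rfl
  rw [h1]
  have h2 : Nat.card (LinearMap.range M.vecMulLinear) = Nat.card (G → R) :=
    (Nat.card_congr (LinearEquiv.ofInjective M.vecMulLinear hinj).toEquiv).symm
  rw [h2, Nat.card_eq_fintype_card, Nat.card_eq_fintype_card]
  simp

end Main

/-- Over a finite commutative Frobenius ring of characteristic 2, [Iₙ | σ(v)] generates a
    self-dual code iff v·vᵀ = 1, i.e. v is a unitary unit of RG. -/
theorem stmt_10 (R G : Type*) [CommRing R] [Fintype R] [CharP R 2]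
    [Group G] [Fintype G] [DecidableEq G]
    (hFrob : ∀ (ι : Type) [Fintype ι] (C : Submodule R (ι → R)),
      Nat.card C * Nat.card (dualCode C) = Nat.card R ^ Fintype.card ι)
    (v : MonoidAlgebra R G) :
    (Submodule.span R (Set.range fun i => Matrix.fromCols (1 : Matrix G G R) (sigmaMat v) i)
        = dualCode (Submodule.span R
            (Set.range fun i => Matrix.fromCols (1 : Matrix G G R) (sigmaMat v) i)))
      ↔ v * transInvol v = 1 := by
  set M : Matrix G (G ⊕ G) R := Matrix.fromCols (1 : Matrix G G R) (sigmaMat v) with hM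
  set C : Submodule R ((G ⊕ G) → R) := Submodule.span R (Set.range fun i => M i) with hC
  constructor
  · intro h
    rw [← rows_orthog_iff v, ← span_le_dual_iff]
    exact le_of_eq h
  · intro h
    have hle : C ≤ dualCode C := by
      rw [hC, span_le_dual_iff M, hM, rows_orthog_iff v]
      exact h
    have hinj : Function.Injective M.vecMulLinear := by
      rw [injective_iff_map_eq_zero]
      intro x hx
      funext j
      have h0 := congrFun hx (Sum.inl j)
      simp only [Matrix.vecMulLinear_apply, Matrix.vecMul, dotProduct, hM,
        Matrix.fromCols, Matrix.of_apply, Sum.elim_inl, Matrix.one_apply, Pi.zero_apply,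
        mul_ite, mul_one, mul_zero, Finset.sum_ite_eq, Finset.sum_ite_eq', Finset.mem_univ,
        if_true] at h0
      simpa using h0
    have hcard : Nat.card C = Nat.card R ^ Fintype.card G := card_span_rows M hinj
    have hfrob := frob_univ hFrob (G ⊕ G) C
    have hcard2 : Nat.card (dualCode C) = Nat.card R ^ Fintype.card G := by
      have hpos : 0 < Nat.card R ^ Fintype.card G := by
        have : 0 < Nat.card R := Nat.card_pos
        positivity
      rw [hcard] at hfrob
      rw [show Fintype.card (G ⊕ G) = Fintype.card G + Fintype.card G from
        Fintype.card_sum, pow_add] at hfrob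
      exact Nat.eq_of_mul_eq_mul_left hpos hfrob
    have hsets : (C : Set ((G ⊕ G) → R)) = (dualCode C : Set ((G ⊕ G) → R)) := by
      apply Set.eq_of_subset_of_ncard_le hle _ (Set.toFinite _)
      have e1 : (C : Set ((G ⊕ G) → R)).ncard = Nat.card C :=
        (Nat.card_coe_set_eq _).symm
      have e2 : ((dualCode C : Set ((G ⊕ G) → R))).ncard = Nat.card (dualCode C) :=
        (Nat.card_coe_set_eq _).symm
      rw [e1, e2, hcard, hcard2]
    exact SetLike.coe_injective hsets
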